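/- For all r, s ∈ {1,…,N}, one has ρ_{rs} = ρ̃_{rs}. That is, the coefficients of the quadratic terms in the action of the non-gauged integrable coupled σ-model coincide with the corresponding coefficients of its gauged formulation, so that the gauged action reduces to the non-gauged one under the gauge-fixing g^{(N+1)} = Id. -/

import Mathlib

/-- The function `φ^r_±(v) = (v - z_r) φ_±(v)`, where
`φ_±(v) = ∏_i (v - ζ^±_i) / ∏_s (v - z_s)`, with the pole at `z_r` removed so that it is
defined (and differentiable) at `v = z_r`. -/
noncomputable def phiReg (N : ℕ) (z ζ : Fin N → ℂ) (r : Fin N) (v : ℂ) : ℂ :=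
  (∏ i, (v - ζ i)) / ∏ s ∈ Finset.univ.erase r, (v - z s)

/-- The function `φ̃^r_±(v) = (v - z̃_r) φ̃_±(v)`, where
`φ̃_±(v) = ∏_{i≤N} (v - ζ̃^±_i) / ∏_{s≤N+1} (v - z̃_s)`, with the pole at `z̃_r` removed
so that it is defined (and differentiable) at `v = z̃_r`. -/
noncomputable def phiTReg (N : ℕ) (zt : Fin (N + 1) → ℂ) (ζt : Fin N → ℂ) (r : Fin (N + 1))
    (v : ℂ) : ℂ :=
  (∏ i, (v - ζt i)) / ∏ s ∈ Finset.univ.erase r, (v - zt s)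

lemma mobius_sub (a b c d x y : ℂ) (hx : c*x+d ≠ 0) (hy : c*y+d ≠ 0) :
    (a*x+b)/(c*x+d) - (a*y+b)/(c*y+d) = ((a*d-b*c)*(x-y))/((c*x+d)*(c*y+d)) := by
  rw [div_sub_div _ _ hx hy]; ring

lemma mobius_sub_inf (a b c d x : ℂ) (hc : c ≠ 0) (hx : c*x+d ≠ 0) :
    (a*x+b)/(c*x+d) - a/c = -(a*d-b*c)/(c*(c*x+d)) := by
  rw [div_sub_div _ _ hx hc]; ring

lemma erase_castSucc {N : ℕ} (r : Fin N) :
    (Finset.univ.erase (Fin.castSucc r) : Finset (Fin (N+1))) =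
      insert (Fin.last N) ((Finset.univ.erase r).image Fin.castSucc) := by
  ext s
  simp only [Finset.mem_erase, Finset.mem_univ, and_true, Finset.mem_insert, Finset.mem_image]
  constructor
  · intro hs
    rcases Fin.eq_castSucc_or_eq_last s with ⟨t, rfl⟩ | rfl
    · exact Or.inr ⟨t, fun h => hs (by rw [h]), rfl⟩
    · exact Or.inl rfl
  · rintro (rfl | ⟨t, ht, rfl⟩)
    · exact fun h => (Fin.castSucc_lt_last r).ne h.symm
    · exact fun h => ht (Fin.castSucc_injective _ h)

lemma last_not_mem_image {N : ℕ} (r : Fin N) :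
    Fin.last N ∉ (Finset.univ.erase r).image Fin.castSucc := by
  simp only [Finset.mem_image, not_exists]
  rintro t ⟨-, ht⟩
  exact (Fin.castSucc_lt_last t).ne ht

lemma const_calc (Kp ep K e P Q w c : ℂ) (hKp : Kp ≠ 0) (hep : ep ≠ 0) (hK : K ≠ 0)
    (he : e ≠ 0) (hP : P ≠ 0) (hQ : Q ≠ 0) (hw : w ≠ 0) (hc : c ≠ 0) :
    ((Kp*K) / ((ep*e) * P)) / ((-K/(c*e)) * (Kp/(ep*Q))) = -c * ((Q*w)/P) / w := by
  field_simp

lemma key_fun {N : ℕ} (z ζ : Fin N → ℂ) (a b c d : ℂ)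
    (hdet : a*d - b*c ≠ 0) (hc : c ≠ 0) (hzfin : ∀ r, c * z r + d ≠ 0)
    (hζfin : ∀ i, c * ζ i + d ≠ 0)
    (zt : Fin (N+1) → ℂ) (hzt : ∀ r : Fin N, zt r.castSucc = (a * z r + b)/(c * z r + d))
    (hztlast : zt (Fin.last N) = a / c) (r : Fin N) (v : ℂ) (hv : c * v + d ≠ 0) :
    phiTReg N zt (fun i => (a * ζ i + b)/(c * ζ i + d)) r.castSucc ((a*v+b)/(c*v+d))
      = (-c * ((∏ s, (c * z s + d)) / ∏ i, (c * ζ i + d)) / (c * z r + d))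
        * phiReg N z ζ r v := by
  have hK : a*d - b*c ≠ 0 := hdet
  unfold phiTReg phiReg
  have hnum : (∏ i, ((a*v+b)/(c*v+d) - (a * ζ i + b)/(c * ζ i + d)))
      = (∏ i, (v - ζ i)) * ∏ i, ((a*d-b*c) / ((c*v+d) * (c * ζ i + d))) := by
    rw [← Finset.prod_mul_distrib]
    refine Finset.prod_congr rfl fun i _ => ?_
    rw [mobius_sub a b c d v (ζ i) hv (hζfin i)]
    ring
  have hden : (∏ s ∈ Finset.univ.erase (Fin.castSucc r), ((a*v+b)/(c*v+d) - zt s))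
      = (-(a*d-b*c)/(c*(c*v+d))) *
        ((∏ s ∈ Finset.univ.erase r, (v - z s)) *
          ∏ s ∈ Finset.univ.erase r, ((a*d-b*c) / ((c*v+d) * (c * z s + d)))) := by
    rw [erase_castSucc, Finset.prod_insert (last_not_mem_image r),
      Finset.prod_image (fun x _ y _ h => Fin.castSucc_injective _ h), hztlast,
      mobius_sub_inf a b c d v hc hv, ← Finset.prod_mul_distrib]
    congr 1
    refine Finset.prod_congr rfl fun s _ => ?_
    rw [hzt s, mobius_sub a b c d v (z s) hv (hzfin s)]
    ring
  rw [hnum, hden]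
  have habstract : ∀ X Z A B0 B1 C : ℂ, A / (B0 * B1) = C →
      (X * A) / (B0 * (Z * B1)) = C * (X / Z) := by
    intro X Z A B0 B1 C h
    rw [← h]
    field_simp
  refine habstract _ _ _ _ _ _ ?_
  have hA : (∏ i : Fin N, ((a*d-b*c) / ((c*v+d) * (c * ζ i + d))))
      = (a*d-b*c)^N / ((c*v+d)^N * ∏ i, (c * ζ i + d)) := by
    rw [Finset.prod_div_distrib, Finset.prod_const, Finset.prod_mul_distrib,
      Finset.prod_const, Finset.card_univ, Fintype.card_fin]
  have hcard : (Finset.univ.erase r).card = N - 1 := by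
    rw [Finset.card_erase_of_mem (Finset.mem_univ r), Finset.card_univ, Fintype.card_fin]
  have hB1 : (∏ s ∈ Finset.univ.erase r, ((a*d-b*c) / ((c*v+d) * (c * z s + d))))
      = (a*d-b*c)^(N-1) / ((c*v+d)^(N-1) * ∏ s ∈ Finset.univ.erase r, (c * z s + d)) := by
    rw [Finset.prod_div_distrib, Finset.prod_const, Finset.prod_mul_distrib,
      Finset.prod_const, hcard]
  rw [hA, hB1]
  have hNpos : 1 ≤ N := Nat.one_le_iff_ne_zero.mpr (by rintro rfl; exact r.elim0)
  have hNeq : N - 1 + 1 = N := Nat.succ_pred_eq_of_pos hNpos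
  have hPz : (∏ s ∈ Finset.univ.erase r, (c * z s + d)) * (c * z r + d)
      = ∏ s, (c * z s + d) := Finset.prod_erase_mul _ _ (Finset.mem_univ r)
  have hQz : (∏ s ∈ Finset.univ.erase r, (c * z s + d)) ≠ 0 :=
    Finset.prod_ne_zero_iff.mpr fun s _ => hzfin s
  have hPζ : (∏ i, (c * ζ i + d)) ≠ 0 := Finset.prod_ne_zero_iff.mpr fun i _ => hζfin i
  have hKN : (a*d-b*c)^N = (a*d-b*c)^(N-1) * (a*d-b*c) := by
    rw [← pow_succ, hNeq]
  have hvN : (c*v+d)^N = (c*v+d)^(N-1) * (c*v+d) := by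
    rw [← pow_succ, hNeq]
  rw [hKN, hvN, ← hPz]
  exact const_calc _ _ _ _ _ _ _ _ (pow_ne_zero _ hK) (pow_ne_zero _ hv) hK hv hPζ hQz
    (hzfin r) hc

lemma deriv_transfer (F G f : ℂ → ℂ) (κ x y : ℂ) (hy : y = f x)
    (hev : ∀ᶠ v in nhds x, F (f v) = κ * G v)
    (hF : DifferentiableAt ℂ F y) (f' : ℂ) (hf : HasDerivAt f f' x) (hf' : f' ≠ 0) :
    deriv F y = κ * deriv G x / f' := by
  have h1 : deriv (fun v => F (f v)) x = deriv (fun v => κ * G v) x :=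
    Filter.EventuallyEq.deriv_eq hev
  have h2 : deriv (fun v => κ * G v) x = κ * deriv G x := deriv_const_mul_field κ
  have h3 : deriv (fun v => F (f v)) x = deriv F y * f' := by
    subst hy
    rw [← hf.deriv]
    exact deriv_comp x hF hf.differentiableAt
  rw [eq_div_iff hf', ← h3, h1, h2]

lemma mobius_hasDerivAt (a b c d K x : ℂ) (hx : c*x+d ≠ 0) (hK : K = a*d-b*c) :
    HasDerivAt (fun v => (a*v+b)/(c*v+d)) (K/(c*x+d)^2) x := by
  have h1 : HasDerivAt (fun v : ℂ => a*v+b) a x := by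
    simpa using ((hasDerivAt_id x).const_mul a).add_const b
  have h2 : HasDerivAt (fun v : ℂ => c*v+d) c x := by
    simpa using ((hasDerivAt_id x).const_mul c).add_const d
  have := h1.div h2 hx
  refine this.congr_deriv ?_
  rw [hK]
  ring

lemma phiTReg_differentiableAt {N : ℕ} (zt : Fin (N+1) → ℂ) (ζt : Fin N → ℂ)
    (r : Fin (N+1)) (x : ℂ) (h : ∀ s ∈ Finset.univ.erase r, x - zt s ≠ 0) :
    DifferentiableAt ℂ (phiTReg N zt ζt r) x := by
  unfold phiTReg
  apply DifferentiableAt.div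
  · exact DifferentiableAt.fun_finsetProd fun i _ => (differentiableAt_id.sub_const _)
  · exact DifferentiableAt.fun_finsetProd fun s _ => (differentiableAt_id.sub_const _)
  · exact Finset.prod_ne_zero_iff.mpr h

lemma key_deriv {N : ℕ} (z ζ : Fin N → ℂ) (hz : Function.Injective z) (a b c d : ℂ)
    (hdet : a*d - b*c ≠ 0) (hc : c ≠ 0) (hzfin : ∀ r, c * z r + d ≠ 0)
    (hζfin : ∀ i, c * ζ i + d ≠ 0)
    (zt : Fin (N+1) → ℂ) (hzt : ∀ r : Fin N, zt r.castSucc = (a * z r + b)/(c * z r + d))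
    (hztlast : zt (Fin.last N) = a / c) (r : Fin N) :
    deriv (phiTReg N zt (fun i => (a * ζ i + b)/(c * ζ i + d)) r.castSucc) (zt r.castSucc)
      = (-c * ((∏ s, (c * z s + d)) / ∏ i, (c * ζ i + d)) / (c * z r + d))
        * deriv (phiReg N z ζ r) (z r) / ((a*d-b*c) / (c * z r + d)^2) := by
  apply deriv_transfer _ _ (fun v => (a*v+b)/(c*v+d)) _ (z r) _ (hzt r)
  · have hcont : ContinuousAt (fun v : ℂ => c*v+d) (z r) := by fun_prop
    filter_upwards [hcont.eventually_ne (hzfin r)] with v hv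
    exact key_fun z ζ a b c d hdet hc hzfin hζfin zt hzt hztlast r v hv
  · apply phiTReg_differentiableAt
    intro s hs
    have hsne : s ≠ r.castSucc := (Finset.mem_erase.mp hs).1
    rcases Fin.eq_castSucc_or_eq_last s with ⟨t, rfl⟩ | rfl
    · have htr : t ≠ r := fun h => hsne (by rw [h])
      rw [hzt r, hzt t, mobius_sub a b c d (z r) (z t) (hzfin r) (hzfin t)]
      exact div_ne_zero (mul_ne_zero hdet (sub_ne_zero.mpr fun h => htr (hz h.symm)))
        (mul_ne_zero (hzfin r) (hzfin t))
    · rw [hzt r, hztlast, mobius_sub_inf a b c d (z r) hc (hzfin r)]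
      exact div_ne_zero (neg_ne_zero.mpr hdet) (mul_ne_zero hc (hzfin r))
  · exact mobius_hasDerivAt a b c d _ (z r) (hzfin r) rfl
  · exact div_ne_zero hdet (pow_ne_zero _ (hzfin r))

lemma offdiag_calc (linf c ωp ωm K wr ws Δ Vp Vm : ℂ) (hc : c ≠ 0) (hωp : ωp ≠ 0)
    (hωm : ωm ≠ 0) (hK : K ≠ 0) (hwr : wr ≠ 0) (hws : ws ≠ 0) (hΔ : Δ ≠ 0) :
    linf / 2 * Vp * Vm / Δ
      = linf * K / (c^2 * ωp * ωm) / 2 * (-c*ωp/wr * Vp) * (-c*ωm/ws * Vm)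
        / (K * Δ / (wr * ws)) := by
  have hu : (K*K⁻¹) * (c*c⁻¹)^2 * (ωp*ωp⁻¹) * (ωm*ωm⁻¹) * (wr*wr⁻¹) * (ws*ws⁻¹) * (Δ*Δ⁻¹)
      = 1 := by
    rw [mul_inv_cancel₀ hK, mul_inv_cancel₀ hc, mul_inv_cancel₀ hωp, mul_inv_cancel₀ hωm,
      mul_inv_cancel₀ hwr, mul_inv_cancel₀ hws, mul_inv_cancel₀ hΔ]
    norm_num
  field_simp

lemma diag_calc (linf c ωp ωm K wr Dp Dm Vp Vm : ℂ) (hc : c ≠ 0) (hωp : ωp ≠ 0)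
    (hωm : ωm ≠ 0) (hK : K ≠ 0) (hwr : wr ≠ 0) :
    linf / 4 * (Dp * Vm - Vp * Dm)
      = linf * K / (c^2 * ωp * ωm) / 4 *
        ((-c*ωp/wr * Dp / (K/wr^2)) * (-c*ωm/wr * Vm)
          - (-c*ωp/wr * Vp) * (-c*ωm/wr * Dm / (K/wr^2))) := by
  have hu : (K*K⁻¹)^2 * (c*c⁻¹)^2 * (ωp*ωp⁻¹) * (ωm*ωm⁻¹) * (wr*wr⁻¹)^4 = 1 := by
    rw [mul_inv_cancel₀ hK, mul_inv_cancel₀ hc, mul_inv_cancel₀ hωp, mul_inv_cancel₀ hωm,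
      mul_inv_cancel₀ hwr]
    norm_num
  field_simp

/-- For all `r, s ∈ {1,…,N}` one has `ρ_{rs} = ρ̃_{rs}`: the coefficients of the quadratic
terms in the action of the non-gauged integrable coupled σ-model coincide with the
corresponding coefficients of its gauged formulation, so that the gauged action reduces to
the non-gauged one under the gauge-fixing `g^{(N+1)} = Id`. -/
theorem statement12 (N : ℕ) (hN : 1 ≤ N) (z : Fin N → ℂ) (hz : Function.Injective z)
    (ζp ζm : Fin N → ℂ) (hζp : ∀ i r, ζp i ≠ z r) (hζm : ∀ i r, ζm i ≠ z r)
    (linf : ℂ)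
    (a b c d : ℝ) (hdet : (a : ℂ) * d - b * c ≠ 0) (hc : (c : ℂ) ≠ 0)
    (hzfin : ∀ r, (c : ℂ) * z r + d ≠ 0)
    (hζpfin : ∀ i, (c : ℂ) * ζp i + d ≠ 0) (hζmfin : ∀ i, (c : ℂ) * ζm i + d ≠ 0)
    (f : ℂ → ℂ) (hf : ∀ v, f v = ((a : ℂ) * v + b) / ((c : ℂ) * v + d))
    (zt : Fin (N + 1) → ℂ) (hzt : ∀ r : Fin N, zt r.castSucc = f (z r))
    (hztlast : zt (Fin.last N) = (a : ℂ) / c)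
    (ωp ωm : ℂ)
    (hωp : ωp = (∏ r, ((c : ℂ) * z r + d)) / ∏ i, ((c : ℂ) * ζp i + d))
    (hωm : ωm = (∏ r, ((c : ℂ) * z r + d)) / ∏ i, ((c : ℂ) * ζm i + d))
    (ltinf : ℂ)
    (hltinf : ltinf = linf * ((a : ℂ) * d - b * c) / ((c : ℂ) ^ 2 * ωp * ωm))
    (ρ : Fin N → Fin N → ℂ)
    (hρdiag : ∀ r, ρ r r = linf / 4 *
      (deriv (phiReg N z ζp r) (z r) * phiReg N z ζm r (z r)
        - phiReg N z ζp r (z r) * deriv (phiReg N z ζm r) (z r)))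
    (hρoff : ∀ r s, r ≠ s →
      ρ r s = linf / 2 * phiReg N z ζp r (z r) * phiReg N z ζm s (z s) / (z r - z s))
    (ρt : Fin (N + 1) → Fin (N + 1) → ℂ)
    (hρtdiag : ∀ r, ρt r r = ltinf / 4 *
      (deriv (phiTReg N zt (fun i => f (ζp i)) r) (zt r)
          * phiTReg N zt (fun i => f (ζm i)) r (zt r)
        - phiTReg N zt (fun i => f (ζp i)) r (zt r)
          * deriv (phiTReg N zt (fun i => f (ζm i)) r) (zt r)))
    (hρtoff : ∀ r s, r ≠ s →
      ρt r s = ltinf / 2 * phiTReg N zt (fun i => f (ζp i)) r (zt r)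
        * phiTReg N zt (fun i => f (ζm i)) s (zt s) / (zt r - zt s)) :
    ∀ r s : Fin N, ρ r s = ρt r.castSucc s.castSucc := by
  have hfz : ∀ t : Fin N, zt t.castSucc = ((a:ℂ) * z t + b)/((c:ℂ) * z t + d) :=
    fun t => (hzt t).trans (hf _)
  have hζpfun : (fun i => f (ζp i)) = fun i => ((a:ℂ)*ζp i + b)/((c:ℂ)*ζp i + d) :=
    funext fun i => hf _
  have hζmfun : (fun i => f (ζm i)) = fun i => ((a:ℂ)*ζm i + b)/((c:ℂ)*ζm i + d) :=
    funext fun i => hf _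
  have hωpne : ωp ≠ 0 := by
    rw [hωp]
    exact div_ne_zero (Finset.prod_ne_zero_iff.mpr fun t _ => hzfin t)
      (Finset.prod_ne_zero_iff.mpr fun i _ => hζpfin i)
  have hωmne : ωm ≠ 0 := by
    rw [hωm]
    exact div_ne_zero (Finset.prod_ne_zero_iff.mpr fun t _ => hzfin t)
      (Finset.prod_ne_zero_iff.mpr fun i _ => hζmfin i)
  have hvalp : ∀ t : Fin N, phiTReg N zt (fun i => f (ζp i)) t.castSucc (zt t.castSucc)
      = (-(c:ℂ) * ωp / ((c:ℂ) * z t + d)) * phiReg N z ζp t (z t) := by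
    intro t
    rw [hζpfun, hfz t, hωp]
    exact key_fun z ζp a b c d hdet hc hzfin hζpfin zt hfz hztlast t (z t) (hzfin t)
  have hvalm : ∀ t : Fin N, phiTReg N zt (fun i => f (ζm i)) t.castSucc (zt t.castSucc)
      = (-(c:ℂ) * ωm / ((c:ℂ) * z t + d)) * phiReg N z ζm t (z t) := by
    intro t
    rw [hζmfun, hfz t, hωm]
    exact key_fun z ζm a b c d hdet hc hzfin hζmfin zt hfz hztlast t (z t) (hzfin t)
  have hderp : ∀ t : Fin N,
      deriv (phiTReg N zt (fun i => f (ζp i)) t.castSucc) (zt t.castSucc)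
      = (-(c:ℂ) * ωp / ((c:ℂ) * z t + d)) * deriv (phiReg N z ζp t) (z t)
        / (((a:ℂ)*d-b*c) / ((c:ℂ) * z t + d)^2) := by
    intro t
    rw [hζpfun, hωp]
    exact key_deriv z ζp hz a b c d hdet hc hzfin hζpfin zt hfz hztlast t
  have hderm : ∀ t : Fin N,
      deriv (phiTReg N zt (fun i => f (ζm i)) t.castSucc) (zt t.castSucc)
      = (-(c:ℂ) * ωm / ((c:ℂ) * z t + d)) * deriv (phiReg N z ζm t) (z t)
        / (((a:ℂ)*d-b*c) / ((c:ℂ) * z t + d)^2) := by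
    intro t
    rw [hζmfun, hωm]
    exact key_deriv z ζm hz a b c d hdet hc hzfin hζmfin zt hfz hztlast t
  intro r s
  by_cases hrs : r = s
  · subst hrs
    rw [hρdiag r, hρtdiag r.castSucc, hvalp r, hvalm r, hderp r, hderm r, hltinf]
    exact diag_calc linf _ ωp ωm _ _ _ _ _ _ hc hωpne hωmne hdet (hzfin r)
  · have hrs' : r.castSucc ≠ s.castSucc := fun h => hrs (Fin.castSucc_injective _ h)
    rw [hρoff r s hrs, hρtoff _ _ hrs', hvalp r, hvalm s, hltinf, hfz r, hfz s,
      mobius_sub a b c d (z r) (z s) (hzfin r) (hzfin s)]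
    have hΔ : z r - z s ≠ 0 := sub_ne_zero.mpr fun h => hrs (hz h)
    exact offdiag_calc linf _ ωp ωm _ _ _ _ _ _ hc hωpne hωmne hdet (hzfin r) (hzfin s) hΔ
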